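/- Let the potential be v(x) = 2cos(2πx). Then for every λ > 0 and every E ∈ ℝ, the Lyapunov exponent of the Schrödinger cocycle over the doubling map with potential λv satisfies L(E;λ) ≥ log λ. -/

import Mathlib

open Real MeasureTheory Filter in
noncomputable def arccot (y : ℝ) : ℝ := Real.pi / 2 - Real.arctan y

/-- Euclidean (= ℓ²) operator norm of a 2×2 real matrix. -/
noncomputable def matNorm (M : Matrix (Fin 2) (Fin 2) ℝ) : ℝ :=
  ‖(Matrix.toEuclideanLin.trans LinearMap.toContinuousLinearMap) M‖

/-- Cocycle iterates over the doubling map `x ↦ 2x`. -/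
def cocycle (A : ℝ → Matrix (Fin 2) (Fin 2) ℝ) : ℕ → ℝ → Matrix (Fin 2) (Fin 2) ℝ
  | 0, _ => 1
  | n + 1, x => cocycle A n (2 * x) * A x

/-- Lyapunov exponent (as the infimum of the subadditive sequence). -/
noncomputable def lyap (A : ℝ → Matrix (Fin 2) (Fin 2) ℝ) : ℝ :=
  ⨅ n : ℕ, (1 / (n + 1 : ℝ)) * ∫ x in (0:ℝ)..1, Real.log (matNorm (cocycle A (n + 1) x))

/-- The angles θₙ. -/
noncomputable def thetaN (v : ℝ → ℝ) (t lam : ℝ) : ℕ → ℝ → ℝ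
  | 0, x => arccot (t - v x)
  | n + 1, x =>
      arccot (lam ^ 2 * ((t - v (2 ^ (n + 1) * x)) ^ 2 + 1) *
          Real.cot (thetaN v t lam n x))
        + arccot (t - v (2 ^ (n + 1) * x))

/-- The polar-form cocycle map. -/
noncomputable def polarA (v : ℝ → ℝ) (t lam : ℝ) (x : ℝ) : Matrix (Fin 2) (Fin 2) ℝ :=
  !![lam * Real.sqrt ((t - v (2 * x)) ^ 2 + 1), 0;
     0, lam⁻¹ / Real.sqrt ((t - v (2 * x)) ^ 2 + 1)] *
  !![Real.cos (arccot (t - v x)), -Real.sin (arccot (t - v x));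
     Real.sin (arccot (t - v x)), Real.cos (arccot (t - v x))]

/-- Distance to the nearest point of πℤ. -/
noncomputable def distRP1 (s : ℝ) : ℝ := |s - round (s / Real.pi) * Real.pi|


open Real Complex MeasureTheory intervalIntegral Metric Polynomial Filter Topology

noncomputable def Complex.abs : AbsoluteValue ℂ ℝ := NormedField.toAbsoluteValue ℂ

@[simp] lemma Complex.abs_apply' (z : ℂ) : Complex.abs z = ‖z‖ := rfl

lemma Complex.abs_ofReal (x : ℝ) : Complex.abs (x : ℂ) = |x| := by simp

lemma Complex.abs_conj (z : ℂ) : Complex.abs ((starRingEnd ℂ) z) = Complex.abs z := by simp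

lemma Complex.continuous_abs : Continuous Complex.abs := continuous_norm

lemma Complex.abs_exp_ofReal_mul_I (x : ℝ) : Complex.abs (Complex.exp (x * Complex.I)) = 1 :=
  Complex.norm_exp_ofReal_mul_I x

lemma slitA {w : ℂ} (h : Complex.abs w < 1) : 1 - w ∈ Complex.slitPlane := by
  have : w.re < 1 := lt_of_le_of_lt (Complex.re_le_norm _) h
  exact Complex.mem_slitPlane_iff.mpr (Or.inl (by simp [Complex.sub_re]; linarith))

lemma contA (c : ℂ) (hc : ‖c‖ < 1) :
    Continuous fun θ : ℝ => Complex.log (1 - c * Complex.exp (θ * Complex.I)) := by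
  rw [continuous_iff_continuousAt]
  intro θ
  have harg : Continuous fun θ : ℝ => 1 - c * Complex.exp (θ * Complex.I) := by
    continuity
  apply ContinuousAt.clog harg.continuousAt
  apply slitA
  rw [map_mul, Complex.abs_exp_ofReal_mul_I]
  simpa using hc

lemma lemA2pi (c : ℂ) (hc : ‖c‖ < 1) :
    ∫ θ in (0:ℝ)..(2*Real.pi), Real.log (Complex.abs (1 - c * Complex.exp (θ * Complex.I))) = 0 := by
  set f : ℂ → ℂ := fun z => Complex.log (1 - c * z) with hf
  have hd : ∀ z ∈ closedBall (0:ℂ) 1, DifferentiableAt ℂ f z := by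
    intro z hz
    have hz1 : Complex.abs z ≤ 1 := by simpa [Complex.dist_eq] using hz
    have h1 : Complex.abs (c * z) < 1 := by
      rw [map_mul]
      calc Complex.abs c * Complex.abs z ≤ Complex.abs c * 1 :=
            mul_le_mul_of_nonneg_left hz1 (Complex.abs.nonneg c)
        _ < 1 := by simpa using hc
    exact DifferentiableAt.clog (by fun_prop) (slitA h1)
  have dcc : DiffContOnCl ℂ f (ball (0:ℂ) 1) := by
    apply DifferentiableOn.diffContOnCl
    rw [closure_ball (0:ℂ) one_ne_zero]
    exact fun z hz => (hd z hz).differentiableWithinAt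
  have key := dcc.circleIntegral_sub_inv_smul (w := 0) (by simp)
  have hf0 : f 0 = 0 := by simp [hf]
  rw [hf0, smul_zero] at key
  rw [circleIntegral] at key
  simp only [deriv_circleMap, smul_eq_mul, sub_zero] at key
  have hne : ∀ θ : ℝ, circleMap 0 1 θ ≠ 0 := fun θ => by
    simp [circleMap, Complex.exp_ne_zero]
  have eqint : (∫ θ in (0:ℝ)..(2*Real.pi),
        circleMap 0 1 θ * Complex.I * ((circleMap 0 1 θ)⁻¹ * f (circleMap 0 1 θ)))
      = ∫ θ in (0:ℝ)..(2*Real.pi), Complex.I * f (circleMap 0 1 θ) := by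
    apply intervalIntegral.integral_congr
    intro θ _
    show circleMap 0 1 θ * Complex.I * ((circleMap 0 1 θ)⁻¹ * f (circleMap 0 1 θ))
        = Complex.I * f (circleMap 0 1 θ)
    rw [mul_comm (circleMap 0 1 θ) Complex.I, mul_assoc, ← mul_assoc (circleMap 0 1 θ),
      mul_inv_cancel₀ (hne θ), one_mul]
  rw [eqint] at key
  have key2 := key
  rw [intervalIntegral.integral_const_mul] at key2
  have key2' : (∫ θ in (0:ℝ)..(2*Real.pi), f (circleMap 0 1 θ)) = 0 := by
    rcases mul_eq_zero.mp key2 with h | h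
    · exact absurd h Complex.I_ne_zero
    · exact h
  have hcm : ∀ θ : ℝ, circleMap 0 1 θ = Complex.exp (θ * Complex.I) := by
    intro θ; simp [circleMap]
  have hcont : Continuous fun θ : ℝ => f (Complex.exp (θ * Complex.I)) := contA c hc
  have hii : IntervalIntegrable (fun θ : ℝ => f (Complex.exp (θ * Complex.I)))
      volume 0 (2*Real.pi) := hcont.intervalIntegrable _ _
  have key3 : (∫ θ in (0:ℝ)..(2*Real.pi), f (Complex.exp (θ * Complex.I))) = 0 := by
    rw [← key2']
    apply intervalIntegral.integral_congr
    intro θ _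
    simp only [hcm]
  have h2pi : (0:ℝ) ≤ 2*Real.pi := by positivity
  have hint : IntegrableOn (fun θ : ℝ => f (Complex.exp (θ * Complex.I)))
      (Set.Ioc 0 (2*Real.pi)) volume := by
    rw [← intervalIntegrable_iff_integrableOn_Ioc_of_le h2pi]; exact hii
  calc ∫ θ in (0:ℝ)..(2*Real.pi), Real.log (Complex.abs (1 - c * Complex.exp (θ * Complex.I)))
      = ∫ θ in (0:ℝ)..(2*Real.pi), (f (Complex.exp (θ * Complex.I))).re := by
        apply intervalIntegral.integral_congr; intro θ _
        simp [hf, Complex.log_re]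
    _ = (∫ θ in (0:ℝ)..(2*Real.pi), f (Complex.exp (θ * Complex.I))).re := by
        rw [intervalIntegral.integral_of_le h2pi, intervalIntegral.integral_of_le h2pi]
        rw [← RCLike.re_eq_complex_re]
        exact integral_re hint.integrable
    _ = 0 := by rw [key3]; simp

noncomputable def ec (x : ℝ) : ℂ := Complex.exp ((2 * Real.pi * x : ℝ) * Complex.I)

lemma ec_abs (x : ℝ) : Complex.abs (ec x) = 1 := Complex.norm_exp_ofReal_mul_I _

lemma ec_ne_zero (x : ℝ) : ec x ≠ 0 := Complex.exp_ne_zero _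

lemma ec_cont : Continuous ec := by unfold ec; continuity

lemma ec_inv (x : ℝ) : (ec x)⁻¹ = ec (-x) := by
  unfold ec; rw [← Complex.exp_neg]; push_cast; ring_nf

lemma ec_conj (x : ℝ) : (starRingEnd ℂ) (ec x) = ec (-x) := by
  unfold ec
  rw [← Complex.exp_conj]
  congr 1
  rw [map_mul, Complex.conj_I, Complex.conj_ofReal]
  push_cast; ring

lemma ec_sq (x : ℝ) : ec x * ec x = ec (2 * x) := by
  unfold ec; rw [← Complex.exp_add]; push_cast; ring_nf

lemma ec_cos (x : ℝ) : ec x + (ec x)⁻¹ = ((2 * Real.cos (2 * Real.pi * x) : ℝ) : ℂ) := by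
  rw [ec_inv]
  unfold ec
  rw [Complex.exp_mul_I, Complex.exp_mul_I]
  push_cast
  have h1 : (2:ℂ) * ↑Real.pi * -↑x = -(2 * ↑Real.pi * ↑x) := by ring
  rw [h1, Complex.cos_neg, Complex.sin_neg]
  ring

lemma contB (c : ℂ) (hc : Complex.abs c < 1) :
    Continuous fun x : ℝ => Real.log (Complex.abs (1 - c * ec x)) := by
  have h := contA c (by simpa using hc)
  have : (fun x : ℝ => Real.log (Complex.abs (1 - c * ec x)))
      = fun x : ℝ => (Complex.log (1 - c * Complex.exp (((2*Real.pi*x : ℝ) : ℂ) * Complex.I))).re := by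
    funext x; rw [Complex.log_re]; rfl
  rw [this]
  exact Complex.continuous_re.comp (h.comp (by continuity : Continuous fun x : ℝ => 2*Real.pi*x))

lemma lemA01 (c : ℂ) (hc : Complex.abs c < 1) :
    ∫ x in (0:ℝ)..1, Real.log (Complex.abs (1 - c * ec x)) = 0 := by
  have h2pi : (2*Real.pi) ≠ 0 := by positivity
  have := intervalIntegral.integral_comp_mul_left
    (a := 0) (b := 1)
    (fun θ : ℝ => Real.log (Complex.abs (1 - c * Complex.exp ((θ:ℂ) * Complex.I)))) h2pi
  simp only [mul_zero, mul_one] at this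
  rw [lemA2pi c (by simpa using hc), smul_zero] at this
  exact this

/-- Value of the per-root integral at radius `r`. -/
lemma lemB (r : ℝ) (hr : 0 < r) (a : ℂ) (ha : a ≠ 0) (hne : Complex.abs a ≠ r) :
    ∫ x in (0:ℝ)..1, Real.log (Complex.abs (r * ec x - a)) = Real.log (max r (Complex.abs a)) := by
  rcases lt_or_gt_of_ne hne with hlt | hgt
  · -- |a| < r
    set c : ℂ := (starRingEnd ℂ) a / r with hc
    have hcabs : Complex.abs c < 1 := by
      rw [hc, map_div₀, Complex.abs_conj, Complex.abs_ofReal, abs_of_pos hr,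
        div_lt_one hr]
      exact hlt
    have hpt : ∀ x : ℝ, Real.log (Complex.abs (r * ec x - a))
        = Real.log r + Real.log (Complex.abs (1 - c * ec x)) := by
      intro x
      have key : Complex.abs (r * ec x - a) = r * Complex.abs (1 - c * ec x) := by
        have : Complex.abs (1 - c * ec x) = Complex.abs ((starRingEnd ℂ) (1 - c * ec x)) :=
          (Complex.abs_conj _).symm
        rw [this]
        have hconj : (starRingEnd ℂ) (1 - c * ec x) = 1 - (a / r) * ec (-x) := by
          rw [map_sub, map_one, map_mul, ec_conj, hc]
          rw [map_div₀, Complex.conj_conj, Complex.conj_ofReal]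
        rw [hconj]
        have : (r : ℂ) * ec x * (1 - (a / r) * ec (-x)) = r * ec x - a := by
          rw [← ec_inv x]
          field_simp [ec_ne_zero x, Complex.ofReal_ne_zero.mpr (ne_of_gt hr)]
        calc Complex.abs (r * ec x - a) 
            = Complex.abs ((r : ℂ) * ec x * (1 - (a / r) * ec (-x))) := by rw [this]
          _ = r * Complex.abs (1 - (a / r) * ec (-x)) := by
              rw [map_mul, map_mul, ec_abs, Complex.abs_ofReal, abs_of_pos hr, mul_one]
      have h1 : Complex.abs (c * ec x) < 1 := by rw [map_mul, ec_abs, mul_one]; exact hcabs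
      have habs : Complex.abs (1 - c * ec x) ≠ 0 := by
        intro h0
        have h2 : (1 : ℂ) - c * ec x = 0 := Complex.abs.eq_zero.mp h0
        have h3 : c * ec x = 1 := by linear_combination -h2
        rw [h3] at h1; simp at h1
      rw [key, Real.log_mul (ne_of_gt hr) habs]
    rw [intervalIntegral.integral_congr (fun x _ => hpt x)]
    rw [intervalIntegral.integral_add (intervalIntegrable_const)
      ((contB c hcabs).intervalIntegrable _ _)]
    rw [lemA01 c hcabs]
    simp [max_eq_left (le_of_lt hlt : ‖a‖ ≤ r)]
  · -- |a| > r
    set c : ℂ := (r : ℂ) / a with hc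
    have hcabs : Complex.abs c < 1 := by
      rw [hc, map_div₀, Complex.abs_ofReal, abs_of_pos hr, div_lt_one]
      · exact hgt
      · exact lt_trans hr hgt
    have hpt : ∀ x : ℝ, Real.log (Complex.abs (r * ec x - a))
        = Real.log (Complex.abs a) + Real.log (Complex.abs (1 - c * ec x)) := by
      intro x
      have key : (r : ℂ) * ec x - a = (-a) * (1 - c * ec x) := by
        rw [hc]; field_simp; ring
      have h1 : Complex.abs (c * ec x) < 1 := by rw [map_mul, ec_abs, mul_one]; exact hcabs
      have habs : Complex.abs (1 - c * ec x) ≠ 0 := by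
        intro h0
        have h2 : (1 : ℂ) - c * ec x = 0 := Complex.abs.eq_zero.mp h0
        have h3 : c * ec x = 1 := by linear_combination -h2
        rw [h3] at h1; simp at h1
      rw [key, map_mul, map_neg_eq_map, Real.log_mul (by simpa using ha) habs]
    rw [intervalIntegral.integral_congr (fun x _ => hpt x)]
    rw [intervalIntegral.integral_add (intervalIntegrable_const)
      ((contB c hcabs).intervalIntegrable _ _)]
    rw [lemA01 c hcabs]
    simp [max_eq_right (le_of_lt hgt : r ≤ ‖a‖)]
lemma contLogAbs {P : ℝ → ℂ} (hP : Continuous P) (h0 : ∀ x, P x ≠ 0) :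
    Continuous fun x => Real.log (Complex.abs (P x)) := by
  rw [continuous_iff_continuousAt]
  intro x
  exact (Real.continuousAt_log (by simpa using h0 x)).comp
    (Complex.continuous_abs.continuousAt.comp hP.continuousAt)

lemma factor_ne {r : ℝ} (hr : 0 < r) {a : ℂ} (hane : Complex.abs a ≠ r) (x : ℝ) :
    (r : ℂ) * ec x - a ≠ 0 := by
  intro h
  have ha : a = (r : ℂ) * ec x := by linear_combination -h
  apply hane
  rw [ha, map_mul, ec_abs, Complex.abs_ofReal, abs_of_pos hr, mul_one]

lemma prodFactor_cont {r : ℝ} (L : List ℂ) :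
    Continuous fun x : ℝ => (L.map (fun a => (r:ℂ) * ec x - a)).prod := by
  induction L with
  | nil => simpa using continuous_const
  | cons b M ih =>
      simp only [List.map_cons, List.prod_cons]
      exact Continuous.mul ((continuous_const.mul ec_cont).sub continuous_const) ih

lemma prodFactor_ne {r : ℝ} (hr : 0 < r) {L : List ℂ} (hL : ∀ a ∈ L, Complex.abs a ≠ r) (x : ℝ) :
    (L.map (fun a => (r:ℂ) * ec x - a)).prod ≠ 0 := by
  apply List.prod_ne_zero
  intro h0
  rw [List.mem_map] at h0
  obtain ⟨a, haL, ha⟩ := h0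
  exact factor_ne hr (hL a haL) x ha

lemma listInt {r : ℝ} (hr : 0 < r) (L : List ℂ)
    (hL : ∀ a ∈ L, a ≠ 0 ∧ Complex.abs a ≠ r) :
    ∫ x in (0:ℝ)..1, Real.log (Complex.abs ((L.map (fun a => (r:ℂ) * ec x - a)).prod))
      = (L.map (fun a => Real.log (max r (Complex.abs a)))).sum := by
  induction L with
  | nil => simp
  | cons b M ih =>
      have hb := hL b List.mem_cons_self
      have hM : ∀ a ∈ M, a ≠ 0 ∧ Complex.abs a ≠ r := fun a ha => hL a (List.mem_cons_of_mem b ha)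
      have hpt : ∀ x : ℝ,
          Real.log (Complex.abs (((b :: M).map (fun a => (r:ℂ) * ec x - a)).prod))
          = Real.log (Complex.abs ((r:ℂ) * ec x - b))
            + Real.log (Complex.abs ((M.map (fun a => (r:ℂ) * ec x - a)).prod)) := by
        intro x
        rw [List.map_cons, List.prod_cons, map_mul]
        exact Real.log_mul (Complex.abs.ne_zero (factor_ne hr hb.2 x))
          (Complex.abs.ne_zero (prodFactor_ne hr (fun a ha => (hM a ha).2) x))
      rw [intervalIntegral.integral_congr (fun x _ => hpt x)]
      rw [intervalIntegral.integral_add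
        ((contLogAbs (P := fun x => (r:ℂ) * ec x - b) ((continuous_const.mul ec_cont).sub continuous_const)
          (factor_ne hr hb.2)).intervalIntegrable _ _)
        ((contLogAbs (prodFactor_cont M)
          (prodFactor_ne hr (fun a ha => (hM a ha).2))).intervalIntegrable _ _)]
      rw [lemB r hr b hb.1 hb.2, ih hM]
      simp

lemma listLogProd (L : List ℂ) (h0 : ∀ a ∈ L, a ≠ 0) :
    Real.log (Complex.abs L.prod) = (L.map (fun a => Real.log (Complex.abs a))).sum := by
  induction L with
  | nil => simp
  | cons b M ih =>
      have hb := h0 b List.mem_cons_self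
      have hM : ∀ a ∈ M, a ≠ 0 := fun a ha => h0 a (List.mem_cons_of_mem b ha)
      have hMprod : M.prod ≠ 0 := by
        apply List.prod_ne_zero
        intro h0
        exact hM 0 h0 rfl
      rw [List.prod_cons, map_mul,
        Real.log_mul (Complex.abs.ne_zero hb) (Complex.abs.ne_zero hMprod), ih hM]
      simp

/-- σ(r) ≥ log |g(0)| for radius r avoiding root moduli. -/
lemma sigma_ge (g : Polynomial ℂ) (hg0 : Polynomial.eval 0 g ≠ 0) {r : ℝ} (hr : 0 < r)
    (hroots : ∀ a ∈ g.roots, Complex.abs a ≠ r) :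
    ∫ x in (0:ℝ)..1, Real.log (Complex.abs (Polynomial.eval ((r:ℂ) * ec x) g))
      ≥ Real.log (Complex.abs (Polynomial.eval 0 g)) := by
  have hg : g ≠ 0 := fun h => hg0 (by simp [h])
  have hlead : g.leadingCoeff ≠ 0 := Polynomial.leadingCoeff_ne_zero.mpr hg
  set L : List ℂ := g.roots.toList with hLdef
  have hmem : ∀ a, a ∈ L ↔ a ∈ g.roots := fun a => Multiset.mem_toList
  have hL0 : ∀ a ∈ L, a ≠ 0 := by
    intro a ha h0
    apply hg0
    have hroot : Polynomial.IsRoot g a := Polynomial.isRoot_of_mem_roots ((hmem a).mp ha)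
    rw [h0] at hroot; exact hroot
  have hLr : ∀ a ∈ L, Complex.abs a ≠ r := fun a ha => hroots a ((hmem a).mp ha)
  have heval : ∀ w : ℂ, Polynomial.eval w g
      = g.leadingCoeff * (L.map (fun a => w - a)).prod := by
    intro w
    conv_lhs => rw [Polynomial.Splits.eq_prod_roots (IsAlgClosed.splits g)]
    rw [Polynomial.eval_mul, Polynomial.eval_C, Polynomial.eval_multiset_prod]
    congr 1
    rw [Multiset.map_map, ← Multiset.coe_toList g.roots, ← hLdef, Multiset.map_coe,
      Multiset.prod_coe]
    congr 1
    apply List.map_congr_left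
    intro a _
    simp
  have hprodne : ∀ x : ℝ, (L.map (fun a => (r:ℂ) * ec x - a)).prod ≠ 0 :=
    prodFactor_ne hr hLr
  have hpt : ∀ x : ℝ, Real.log (Complex.abs (Polynomial.eval ((r:ℂ) * ec x) g))
      = Real.log (Complex.abs g.leadingCoeff)
        + Real.log (Complex.abs ((L.map (fun a => (r:ℂ) * ec x - a)).prod)) := by
    intro x
    rw [heval ((r:ℂ) * ec x), map_mul]
    exact Real.log_mul (Complex.abs.ne_zero hlead) (Complex.abs.ne_zero (hprodne x))
  rw [intervalIntegral.integral_congr (fun x _ => hpt x)]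
  rw [intervalIntegral.integral_add intervalIntegrable_const
    ((contLogAbs (prodFactor_cont L) hprodne).intervalIntegrable _ _)]
  rw [listInt hr L (fun a ha => ⟨hL0 a ha, hLr a ha⟩)]
  simp only [intervalIntegral.integral_const, smul_eq_mul, sub_zero, mul_one, one_mul]
  -- compute log |g 0|
  have hg0eq : Real.log (Complex.abs (Polynomial.eval 0 g))
      = Real.log (Complex.abs g.leadingCoeff)
        + (L.map (fun a => Real.log (Complex.abs a))).sum := by
    have hprod0 : (L.map (fun a => (0:ℂ) - a)).prod ≠ 0 := by
      apply List.prod_ne_zero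
      intro h0
      rw [List.mem_map] at h0
      obtain ⟨a, haL, ha⟩ := h0
      exact hL0 a haL (by linear_combination -ha)
    rw [heval 0, map_mul, Real.log_mul (Complex.abs.ne_zero hlead) (Complex.abs.ne_zero hprod0)]
    congr 1
    rw [listLogProd _ (fun z hz => by
      rw [List.mem_map] at hz
      obtain ⟨a, haL, ha⟩ := hz
      intro h0
      exact hL0 a haL (by rw [← ha] at h0; linear_combination -h0))]
    rw [List.map_map]
    congr 1
    apply List.map_congr_left
    intro a _
    simp
  rw [hg0eq]
  have hsum : (L.map (fun a => Real.log (Complex.abs a))).sum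
      ≤ (L.map (fun a => Real.log (max r (Complex.abs a)))).sum := by
    apply List.sum_le_sum
    intro a ha
    have hapos : 0 < Complex.abs a := by
      simpa using Complex.abs.pos (hL0 a ha)
    exact Real.log_le_log hapos (le_max_right _ _)
  linarith
lemma coord_le_norm (w : EuclideanSpace ℝ (Fin 2)) (i : Fin 2) : |w i| ≤ ‖w‖ := by
  rw [EuclideanSpace.norm_eq]
  rw [← Real.sqrt_sq_eq_abs]
  apply Real.sqrt_le_sqrt
  have : |w i| ^ 2 ≤ ∑ j, ‖w j‖ ^ 2 := by
    have := Finset.single_le_sum (f := fun j => ‖w j‖ ^ 2)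
      (fun j _ => by positivity) (Finset.mem_univ i)
    simpa [sq_abs] using this
  simpa [sq_abs] using this

lemma entry_le_matNorm (M : Matrix (Fin 2) (Fin 2) ℝ) (i j : Fin 2) :
    |M i j| ≤ matNorm M := by
  set T := (Matrix.toEuclideanLin.trans LinearMap.toContinuousLinearMap) M with hT
  have happ : ∀ v : EuclideanSpace ℝ (Fin 2), T v = Matrix.toEuclideanLin M v := fun v => rfl
  set v : EuclideanSpace ℝ (Fin 2) := EuclideanSpace.single j 1 with hv
  have hMv : (T v) i = M i j := by
    rw [happ, Matrix.toEuclideanLin_apply]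
    show (M.mulVec (Pi.single j 1)) i = M i j
    simp [Matrix.mulVec_single]
  have h1 : |M i j| ≤ ‖T v‖ := by rw [← hMv]; exact coord_le_norm (T v) i
  have h2 : ‖T v‖ ≤ ‖T‖ * ‖v‖ := T.le_opNorm v
  have h3 : ‖v‖ = 1 := by rw [hv, EuclideanSpace.norm_single]; simp
  rw [h3, mul_one] at h2
  exact le_trans h1 h2

lemma matNorm_nonneg (M : Matrix (Fin 2) (Fin 2) ℝ) : 0 ≤ matNorm M := norm_nonneg _

lemma matNorm_pos_of_det {M : Matrix (Fin 2) (Fin 2) ℝ} (h : M.det = 1) : 0 < matNorm M := by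
  rcases lt_or_eq_of_le (matNorm_nonneg M) with h' | h'
  · exact h'
  · exfalso
    have hT : (Matrix.toEuclideanLin.trans LinearMap.toContinuousLinearMap) M = 0 := by
      rw [← norm_eq_zero]; exact h'.symm
    have hM : M = 0 := (LinearEquiv.map_eq_zero_iff _).mp hT
    rw [hM] at h
    simp at h

section herman
variable (E lam : ℝ)

noncomputable def Aher (x : ℝ) : Matrix (Fin 2) (Fin 2) ℝ :=
  !![E - lam * (2 * Real.cos (2 * Real.pi * x)), -1; 1, 0]

lemma Aher_cont : Continuous (Aher E lam) := by
  apply continuous_matrix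
  intro i j
  fin_cases i <;> fin_cases j <;> simp [Aher] <;> continuity

lemma Aher_det (x : ℝ) : (Aher E lam x).det = 1 := by
  simp [Aher, Matrix.det_fin_two]

lemma cocycle_cont (n : ℕ) : Continuous fun x => cocycle (Aher E lam) n x := by
  induction n with
  | zero => exact continuous_const
  | succ m ih =>
      show Continuous fun x => cocycle (Aher E lam) m (2*x) * Aher E lam x
      exact Continuous.matrix_mul (ih.comp (by continuity)) (Aher_cont E lam)

lemma cocycle_det (n : ℕ) (x : ℝ) : (cocycle (Aher E lam) n x).det = 1 := by
  induction n generalizing x with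
  | zero => simp [cocycle]
  | succ m ih =>
      show ((cocycle (Aher E lam) m (2*x)) * Aher E lam x).det = 1
      rw [Matrix.det_mul, ih, Aher_det, one_mul]

lemma matNorm_cocycle_pos (n : ℕ) (x : ℝ) : 0 < matNorm (cocycle (Aher E lam) n x) :=
  matNorm_pos_of_det (cocycle_det E lam n x)

lemma logMatNorm_cont (n : ℕ) :
    Continuous fun x => Real.log (matNorm (cocycle (Aher E lam) n x)) := by
  have h1 : Continuous fun x => matNorm (cocycle (Aher E lam) n x) := by
    have hlin : Continuous fun M : Matrix (Fin 2) (Fin 2) ℝ =>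
        (Matrix.toEuclideanLin.trans LinearMap.toContinuousLinearMap) M := by
      have := LinearMap.continuous_of_finiteDimensional
        (Matrix.toEuclideanLin.trans
          (LinearMap.toContinuousLinearMap
            (𝕜 := ℝ) (E := EuclideanSpace ℝ (Fin 2)) (F' := EuclideanSpace ℝ (Fin 2)))).toLinearMap
      exact this
    exact (continuous_norm.comp hlin).comp (cocycle_cont E lam n)
  rw [continuous_iff_continuousAt]
  intro x
  exact ContinuousAt.comp (x := x)
    (Real.continuousAt_log (ne_of_gt (matNorm_cocycle_pos E lam n x))) h1.continuousAt

end herman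
section herman2

variable (E lam : ℝ)

noncomputable def pq : ℕ → Polynomial ℂ × Polynomial ℂ
  | 0 => (1, 0)
  | n+1 =>
    ((pq n).1.comp (X^2) * (C (E:ℂ) * X - C (lam:ℂ) * (X^2+1)) + (pq n).2.comp (X^2) * X,
     -((pq n).1.comp (X^2)) * X)

lemma pq_zero (n : ℕ) : Polynomial.eval 0 (pq E lam n).1 = (-(lam:ℂ))^n := by
  induction n with
  | zero => simp [pq]
  | succ m ih =>
      show Polynomial.eval 0 ((pq E lam m).1.comp (X^2) * (C (E:ℂ) * X - C (lam:ℂ) * (X^2+1))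
        + (pq E lam m).2.comp (X^2) * X) = _
      rw [Polynomial.eval_add, Polynomial.eval_mul, Polynomial.eval_mul, Polynomial.eval_comp]
      simp only [Polynomial.eval_pow, Polynomial.eval_X, Polynomial.eval_add, Polynomial.eval_one,
        Polynomial.eval_mul, Polynomial.eval_sub, Polynomial.eval_C]
      rw [show ((0:ℂ)^2) = 0 by ring, ih]
      ring

lemma pq_eval (n : ℕ) (x : ℝ) :
    Polynomial.eval (ec x) (pq E lam n).1 * ec x
      = ec x ^ (2^n) * (((cocycle (Aher E lam) n x) 0 0 : ℝ) : ℂ)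
    ∧ Polynomial.eval (ec x) (pq E lam n).2 * ec x
      = ec x ^ (2^n) * (((cocycle (Aher E lam) n x) 0 1 : ℝ) : ℂ) := by
  induction n generalizing x with
  | zero =>
      constructor
      · show Polynomial.eval (ec x) 1 * ec x = ec x ^ 1 * (((1 : Matrix (Fin 2) (Fin 2) ℝ) 0 0 : ℝ) : ℂ)
        simp [Matrix.one_apply]
      · show Polynomial.eval (ec x) 0 * ec x = ec x ^ 1 * (((1 : Matrix (Fin 2) (Fin 2) ℝ) 0 1 : ℝ) : ℂ)
        simp [Matrix.one_apply]
  | succ m ih =>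
      obtain ⟨IH1, IH2⟩ := ih (2 * x)
      set u := ec x with hu
      set V := ec (2 * x) with hV
      set P := Polynomial.eval V (pq E lam m).1 with hP
      set Q := Polynomial.eval V (pq E lam m).2 with hQ
      have hvEq : u * u = V := ec_sq x
      have hune : u ≠ 0 := ec_ne_zero x
      have hcos : u + u⁻¹ = 2 * Complex.cos (2 * (Real.pi:ℂ) * (x:ℂ)) := by
        have h := ec_cos x
        push_cast at h
        rw [← hu] at h
        exact h
      have hkey : u * ((E:ℂ) - (lam:ℂ) * (2 * Complex.cos (2 * (Real.pi:ℂ) * (x:ℂ))))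
          = (E:ℂ) * u - (lam:ℂ) * (u^2 + 1) := by
        rw [← hcos]
        linear_combination (-(lam:ℂ)) * (mul_inv_cancel₀ hune)
      have hpow : u ^ (2^(m+1)) = V ^ (2^m) := by
        rw [← hvEq, ← pow_two, ← pow_mul]
        congr 1
        rw [pow_succ]
        ring
      have hent00 : (cocycle (Aher E lam) (m+1) x) 0 0
          = (cocycle (Aher E lam) m (2*x)) 0 0 * (E - lam * (2 * Real.cos (2 * Real.pi * x)))
            + (cocycle (Aher E lam) m (2*x)) 0 1 := by
        show ((cocycle (Aher E lam) m (2*x)) * (Aher E lam x)) 0 0 = _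
        rw [Matrix.mul_apply, Fin.sum_univ_two]
        simp [Aher]
      have hent01 : (cocycle (Aher E lam) (m+1) x) 0 1
          = -((cocycle (Aher E lam) m (2*x)) 0 0) := by
        show ((cocycle (Aher E lam) m (2*x)) * (Aher E lam x)) 0 1 = _
        rw [Matrix.mul_apply, Fin.sum_univ_two]
        simp [Aher]
      constructor
      · show Polynomial.eval u ((pq E lam m).1.comp (X^2) * (C (E:ℂ) * X - C (lam:ℂ) * (X^2+1))
          + (pq E lam m).2.comp (X^2) * X) * u = u ^ (2^(m+1)) * _
        rw [Polynomial.eval_add, Polynomial.eval_mul, Polynomial.eval_mul, Polynomial.eval_comp,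
          Polynomial.eval_comp]
        simp only [Polynomial.eval_pow, Polynomial.eval_X, Polynomial.eval_sub,
          Polynomial.eval_mul, Polynomial.eval_add, Polynomial.eval_one, Polynomial.eval_C]
        rw [hent00, hpow]
        rw [show Polynomial.eval (u^2) (pq E lam m).1 = P by
          rw [hP]; congr 1; rw [← hvEq]; ring]
        rw [show Polynomial.eval (u^2) (pq E lam m).2 = Q by
          rw [hQ]; congr 1; rw [← hvEq]; ring]
        push_cast
        linear_combination (-(P*u)) * hkey
          + (P*((E:ℂ) - (lam:ℂ) * (2 * Complex.cos (2 * (Real.pi:ℂ) * (x:ℂ)))) + Q) * hvEq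
          + ((E:ℂ) - (lam:ℂ) * (2 * Complex.cos (2 * (Real.pi:ℂ) * (x:ℂ)))) * IH1 + IH2
      · show Polynomial.eval u (-((pq E lam m).1.comp (X^2)) * X) * u = u ^ (2^(m+1)) * _
        rw [Polynomial.eval_mul, Polynomial.eval_neg, Polynomial.eval_comp]
        simp only [Polynomial.eval_pow, Polynomial.eval_X]
        rw [hent01, hpow]
        rw [show Polynomial.eval (u^2) (pq E lam m).1 = P by
          rw [hP]; congr 1; rw [← hvEq]; ring]
        push_cast
        linear_combination (-P) * hvEq + (-1 : ℂ) * IH1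

lemma pq_abs (n : ℕ) (x : ℝ) :
    Complex.abs (Polynomial.eval (ec x) (pq E lam n).1)
      = |(cocycle (Aher E lam) n x) 0 0| := by
  have h := (pq_eval E lam n x).1
  have := congrArg Complex.abs h
  rw [map_mul, map_mul, map_pow, ec_abs, one_pow, mul_one, one_mul, Complex.abs_ofReal] at this
  exact this

end herman2
lemma ec_fiber_countable (a : ℂ) : Set.Countable {x : ℝ | ec x = a} := by
  rcases Set.eq_empty_or_nonempty {x : ℝ | ec x = a} with h | ⟨x₀, hx₀⟩
  · rw [h]; exact Set.countable_empty
  · apply Set.Countable.mono (s₁ := {x : ℝ | ec x = a})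
      (s₂ := Set.range (fun n : ℤ => x₀ + n)) _ (Set.countable_range _)
    intro x hx
    have hexp : Complex.exp ((2 * Real.pi * x : ℝ) * Complex.I)
        = Complex.exp ((2 * Real.pi * x₀ : ℝ) * Complex.I) := by
      have h1 : ec x = a := hx
      have h2 : ec x₀ = a := hx₀
      rw [show ec x = Complex.exp ((2 * Real.pi * x :ℝ) * Complex.I) from rfl] at h1
      rw [show ec x₀ = Complex.exp ((2 * Real.pi * x₀ :ℝ) * Complex.I) from rfl] at h2
      rw [h1, h2]
    rw [Complex.exp_eq_exp_iff_exists_int] at hexp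
    obtain ⟨n, hn⟩ := hexp
    refine ⟨n, ?_⟩
    have key : (2*(Real.pi:ℂ)*Complex.I) * ((x:ℂ) - (x₀:ℂ) - (n:ℂ)) = 0 := by
      push_cast at hn
      linear_combination hn
    have hfac : (2*(Real.pi:ℂ)*Complex.I) ≠ 0 := by
      apply mul_ne_zero
      · apply mul_ne_zero two_ne_zero
        simp [Complex.ofReal_ne_zero, Real.pi_ne_zero]
      · exact Complex.I_ne_zero
    have hzero : (x:ℂ) - (x₀:ℂ) - (n:ℂ) = 0 := by
      rcases mul_eq_zero.mp key with h | h
      · exact absurd h hfac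
      · exact h
    have : (x : ℂ) = ((x₀ + n : ℝ) : ℂ) := by push_cast; linear_combination hzero
    have : x = x₀ + n := Complex.ofReal_injective this
    rw [this]
lemma poly_zero_countable (g : Polynomial ℂ) (hg : g ≠ 0) :
    Set.Countable {x : ℝ | Polynomial.eval (ec x) g = 0} := by
  have hsub : {x : ℝ | Polynomial.eval (ec x) g = 0}
      ⊆ ⋃ a ∈ {a : ℂ | a ∈ g.roots.toList}, {x : ℝ | ec x = a} := by
    intro x hx
    simp only [Set.mem_iUnion, Set.mem_setOf_eq]
    exact ⟨ec x, by rw [Multiset.mem_toList, Polynomial.mem_roots']; exact ⟨hg, hx⟩, rfl⟩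
  exact Set.Countable.mono hsub
    (Set.Countable.biUnion (g.roots.toList.finite_toSet.countable)
      (fun a _ => ec_fiber_countable a))

lemma exists_radii (g : Polynomial ℂ) :
    ∃ r : ℕ → ℝ, (∀ j, 0 < r j ∧ r j < 1) ∧
      (∀ j, ∀ a ∈ g.roots, Complex.abs a ≠ r j) ∧ Tendsto r atTop (𝓝 1) := by
  set Fs : Finset ℝ := insert (1:ℝ)
    (((g.roots.map Complex.abs).toFinset.filter (· < 1)).image (fun t => 1 - t)) with hFs
  have hne : Fs.Nonempty := ⟨1, Finset.mem_insert_self _ _⟩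
  set δ := Fs.min' hne with hδ
  have hδpos : 0 < δ := by
    rw [hδ, Finset.lt_min'_iff]
    intro a ha
    rw [hFs, Finset.mem_insert] at ha
    rcases ha with rfl | ha
    · norm_num
    · rw [Finset.mem_image] at ha
      obtain ⟨t, ht, rfl⟩ := ha
      rw [Finset.mem_filter] at ht
      linarith [ht.2]
  have hδ1 : δ ≤ 1 := Finset.min'_le _ _ (Finset.mem_insert_self _ _)
  refine ⟨fun j => 1 - δ/(j+2), fun j => ⟨?_, ?_⟩, ?_, ?_⟩
  · have h2 : (2:ℝ) ≤ (j:ℝ) + 2 := by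
      have := Nat.cast_nonneg (α := ℝ) j
      linarith
    have : δ/((j:ℝ)+2) ≤ δ/2 := by
      apply div_le_div_of_nonneg_left (le_of_lt hδpos) (by norm_num) h2
    linarith
  · have : 0 < δ/((j:ℝ)+2) := by positivity
    linarith
  · intro j a ha
    have hδj : δ/((j:ℝ)+2) < δ := by
      apply div_lt_self hδpos
      have := Nat.cast_nonneg (α := ℝ) j
      linarith
    rcases lt_or_ge (Complex.abs a) 1 with h1 | h1
    · have hmem : (1 - Complex.abs a) ∈ Fs := by
        rw [hFs, Finset.mem_insert]
        right
        rw [Finset.mem_image]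
        exact ⟨Complex.abs a, by
          rw [Finset.mem_filter, Multiset.mem_toFinset]
          exact ⟨Multiset.mem_map_of_mem _ ha, h1⟩, rfl⟩
      have : δ ≤ 1 - Complex.abs a := Finset.min'_le _ _ hmem
      intro heq
      rw [heq] at this
      linarith
    · intro heq
      have h2 : 0 < δ/((j:ℝ)+2) := by positivity
      rw [heq] at h1  -- h1 : 1 ≤ 1 - δ/(j+2)
      linarith
  · have h1 : Tendsto (fun j : ℕ => δ/((j:ℝ)+2)) atTop (𝓝 0) := by
      apply Tendsto.div_atTop tendsto_const_nhds
      apply Filter.tendsto_atTop_add_const_right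
      exact tendsto_natCast_atTop_atTop
    have := h1.const_sub (b := 1)
    simpa using this
lemma main_n (E lam : ℝ) (hlam : 0 < lam) (n : ℕ) :
    ((n:ℝ)+1) * Real.log lam
      ≤ ∫ x in (0:ℝ)..1, Real.log (matNorm (cocycle (Aher E lam) (n+1) x)) := by
  classical
  set g := (pq E lam (n+1)).1 with hgdef
  have hg0 : Polynomial.eval 0 g = (-(lam:ℂ))^(n+1) := pq_zero E lam (n+1)
  have hg0ne : Polynomial.eval 0 g ≠ 0 := by
    rw [hg0]
    apply pow_ne_zero
    simp [Complex.ofReal_ne_zero, ne_of_gt hlam]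
  have hgne : g ≠ 0 := fun h => hg0ne (by rw [h]; simp)
  have hlog0 : Real.log (Complex.abs (Polynomial.eval 0 g)) = ((n:ℝ)+1) * Real.log lam := by
    rw [hg0, map_pow, map_neg_eq_map, Complex.abs_ofReal, abs_of_pos hlam, Real.log_pow]
    push_cast
    ring
  obtain ⟨r, hr01, hravoid, hrtend⟩ := exists_radii g
  set F : ℝ → ℝ := fun x => Real.log (matNorm (cocycle (Aher E lam) (n+1) x)) with hFdef
  have hFcont : Continuous F := logMatNorm_cont E lam (n+1)
  obtain ⟨xK, hxKmem, hxK⟩ := isCompact_Icc.exists_isMaxOn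
    (Set.nonempty_Icc.mpr (zero_le_one (α := ℝ))) (hFcont.continuousOn (s := Set.Icc 0 1))
  set K := F xK with hKdef
  have hgeval_cont : Continuous fun z : ℂ => Complex.abs (Polynomial.eval z g) :=
    Complex.continuous_abs.comp (Polynomial.continuous g)
  obtain ⟨zM, hzMmem, hzM⟩ := (isCompact_closedBall (0:ℂ) 1).exists_isMaxOn
    ⟨0, by simp⟩ (hgeval_cont.continuousOn)
  set Mb := max (Complex.abs (Polynomial.eval zM g)) 1 with hMbdef
  have hMb1 : (1:ℝ) ≤ Mb := le_max_right _ _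
  have hlogMb : 0 ≤ Real.log Mb := Real.log_nonneg hMb1
  set Cb := max K (Real.log Mb) with hCbdef
  -- bound |g| ≤ Mb on closed ball, log ≤ Cb
  have hball : ∀ w : ℂ, Complex.abs w ≤ 1 → Real.log (Complex.abs (Polynomial.eval w g)) ≤ Cb := by
    intro w hw
    have h1 : Complex.abs (Polynomial.eval w g) ≤ Mb := by
      refine le_trans (hzM ?_) (le_max_left _ _)
      simpa [Complex.dist_eq] using hw
    have h2 : Real.log (Complex.abs (Polynomial.eval w g)) ≤ Real.log Mb := by
      rcases eq_or_lt_of_le (Complex.abs.nonneg (Polynomial.eval w g)) with h | h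
      · rw [← h]; simpa using hlogMb
      · exact Real.log_le_log h h1
    exact le_trans h2 (le_max_right _ _)
  -- h j
  set h : ℕ → ℝ → ℝ := fun j x => Real.log (Complex.abs (Polynomial.eval ((r j : ℂ) * ec x) g))
    with hhdef
  have hevalne : ∀ j x, Polynomial.eval ((r j : ℂ) * ec x) g ≠ 0 := by
    intro j x h0
    have hmem : ((r j : ℂ) * ec x) ∈ g.roots := by
      rw [Polynomial.mem_roots']
      exact ⟨hgne, h0⟩
    apply hravoid j _ hmem
    rw [map_mul, ec_abs, mul_one, Complex.abs_ofReal, abs_of_pos (hr01 j).1]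
  have hhcont : ∀ j, Continuous (h j) :=
    fun j => contLogAbs ((Polynomial.continuous g).comp (continuous_const.mul ec_cont)) (hevalne j)
  have hhle : ∀ j x, h j x ≤ Cb := by
    intro j x
    apply hball
    rw [map_mul, ec_abs, mul_one, Complex.abs_ofReal, abs_of_pos (hr01 j).1]
    exact le_of_lt (hr01 j).2
  have hsigma : ∀ j, Real.log (Complex.abs (Polynomial.eval 0 g)) ≤ ∫ x in (0:ℝ)..1, h j x :=
    fun j => sigma_ge g hg0ne (hr01 j).1 (hravoid j)
  have hlogg0 : Real.log (Complex.abs (Polynomial.eval 0 g)) ≤ Cb := hball 0 (by simp)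
  -- measure setup
  set μ := volume.restrict (Set.Ioc (0:ℝ) 1) with hμdef
  set Z := {x : ℝ | Polynomial.eval (ec x) g = 0} with hZdef
  have hZ0 : μ Z = 0 := by
    have h0 : volume Z = 0 := ((poly_zero_countable g hgne)).measure_zero volume
    exact le_antisymm (le_trans (Measure.le_iff'.mp Measure.restrict_le_self Z) (le_of_eq h0))
      zero_le
  have haeZ : ∀ᵐ x ∂μ, x ∉ Z := measure_eq_zero_iff_ae_notMem.mp hZ0
  have hae : ∀ᵐ x ∂μ, ENNReal.ofReal (Cb - F x)
      ≤ Filter.liminf (fun j => ENNReal.ofReal (Cb - h j x)) atTop := by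
    refine haeZ.mono fun x hx => ?_
    have hgx : Polynomial.eval (ec x) g ≠ 0 := hx
    have habs : 0 < Complex.abs (Polynomial.eval (ec x) g) := Complex.abs.pos hgx
    have hFx : Real.log (Complex.abs (Polynomial.eval (ec x) g)) ≤ F x := by
      have h1 : Complex.abs (Polynomial.eval (ec x) g)
          = |(cocycle (Aher E lam) (n+1) x) 0 0| := pq_abs E lam (n+1) x
      rw [h1]
      apply Real.log_le_log
      · rw [← h1]; exact habs
      · exact entry_le_matNorm _ 0 0
    have htend : Tendsto (fun j => h j x) atTop
        (𝓝 (Real.log (Complex.abs (Polynomial.eval (ec x) g)))) := by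
      have h1 : Tendsto (fun j => ((r j : ℝ) : ℂ) * ec x) atTop (𝓝 (ec x)) := by
        have h2 : Tendsto (fun j => ((r j : ℝ) : ℂ)) atTop (𝓝 ((1:ℝ):ℂ)) :=
          (Complex.continuous_ofReal.tendsto 1).comp hrtend
        have := h2.mul_const (ec x)
        simpa using this
      have h2 : Tendsto (fun j => Complex.abs (Polynomial.eval ((r j : ℂ) * ec x) g)) atTop
          (𝓝 (Complex.abs (Polynomial.eval (ec x) g))) := (hgeval_cont.tendsto _).comp h1
      exact ((Real.continuousAt_log (ne_of_gt habs)).tendsto).comp h2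
    have htendE : Tendsto (fun j => ENNReal.ofReal (Cb - h j x)) atTop
        (𝓝 (ENNReal.ofReal (Cb - Real.log (Complex.abs (Polynomial.eval (ec x) g))))) :=
      (ENNReal.continuous_ofReal.tendsto _).comp (htend.const_sub Cb)
    rw [htendE.liminf_eq]
    exact ENNReal.ofReal_le_ofReal (by linarith)
  -- integrability
  have hhint : ∀ j, IntegrableOn (fun x => Cb - h j x) (Set.Ioc (0:ℝ) 1) volume := by
    intro j
    rw [← intervalIntegrable_iff_integrableOn_Ioc_of_le (zero_le_one (α := ℝ))]
    exact (continuous_const.sub (hhcont j)).intervalIntegrable _ _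
  have hhint' : ∀ j, IntegrableOn (h j) (Set.Ioc (0:ℝ) 1) volume := by
    intro j
    rw [← intervalIntegrable_iff_integrableOn_Ioc_of_le (zero_le_one (α := ℝ))]
    exact (hhcont j).intervalIntegrable _ _
  have hFint : IntegrableOn F (Set.Ioc (0:ℝ) 1) volume := by
    rw [← intervalIntegrable_iff_integrableOn_Ioc_of_le (zero_le_one (α := ℝ))]
    exact hFcont.intervalIntegrable _ _
  have hIoc1 : (volume (Set.Ioc (0:ℝ) 1)).toReal = 1 := by
    rw [Real.volume_Ioc]
    simp
  -- lintegral of u_j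
  have heqj : ∀ j, ∫⁻ x, ENNReal.ofReal (Cb - h j x) ∂μ
      ≤ ENNReal.ofReal (Cb - Real.log (Complex.abs (Polynomial.eval 0 g))) := by
    intro j
    rw [← ofReal_integral_eq_lintegral_ofReal (hhint j)
      (ae_of_all _ fun x => by have := hhle j x; simp; linarith)]
    apply ENNReal.ofReal_le_ofReal
    rw [integral_sub (integrableOn_const (by simp) : IntegrableOn (fun _ => Cb) (Set.Ioc (0:ℝ) 1) volume) (hhint' j)]
    rw [setIntegral_const, measureReal_def, hIoc1, smul_eq_mul, one_mul]
    have : Real.log (Complex.abs (Polynomial.eval 0 g)) ≤ ∫ x in Set.Ioc (0:ℝ) 1, h j x := by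
      rw [← intervalIntegral.integral_of_le (zero_le_one (α := ℝ))]
      exact hsigma j
    linarith
  -- Fatou
  have hfatou : ∫⁻ x, ENNReal.ofReal (Cb - F x) ∂μ
      ≤ ENNReal.ofReal (Cb - Real.log (Complex.abs (Polynomial.eval 0 g))) := by
    calc ∫⁻ x, ENNReal.ofReal (Cb - F x) ∂μ
        ≤ ∫⁻ x, Filter.liminf (fun j => ENNReal.ofReal (Cb - h j x)) atTop ∂μ :=
          lintegral_mono_ae hae
      _ ≤ Filter.liminf (fun j => ∫⁻ x, ENNReal.ofReal (Cb - h j x) ∂μ) atTop :=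
          lintegral_liminf_le fun j =>
            (ENNReal.continuous_ofReal.comp (continuous_const.sub (hhcont j))).measurable
      _ ≤ ENNReal.ofReal (Cb - Real.log (Complex.abs (Polynomial.eval 0 g))) :=
          Filter.liminf_le_of_frequently_le' (Filter.Frequently.of_forall heqj)
  -- F side
  have hCFnn : 0 ≤ᵐ[μ] fun x => Cb - F x := by
    rw [hμdef]
    refine (ae_restrict_iff' measurableSet_Ioc).mpr (ae_of_all _ fun x hx => ?_)
    have h1 : F x ≤ K := hxK ⟨le_of_lt hx.1, hx.2⟩
    have h2 : K ≤ Cb := le_max_left _ _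
    simp
    linarith
  have hleft : ENNReal.ofReal (∫ x in Set.Ioc (0:ℝ) 1, (Cb - F x))
      = ∫⁻ x, ENNReal.ofReal (Cb - F x) ∂μ :=
    ofReal_integral_eq_lintegral_ofReal
      ((integrableOn_const (by simp)).sub hFint) hCFnn
  have hfinal : ∫ x in Set.Ioc (0:ℝ) 1, (Cb - F x)
      ≤ Cb - Real.log (Complex.abs (Polynomial.eval 0 g)) := by
    rw [← ENNReal.ofReal_le_ofReal_iff (by linarith)]
    rw [hleft]
    exact hfatou
  rw [integral_sub (integrableOn_const (by simp) : IntegrableOn (fun _ => Cb) (Set.Ioc (0:ℝ) 1) volume) hFint,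
    setIntegral_const, measureReal_def, hIoc1, smul_eq_mul, one_mul] at hfinal
  rw [← hlog0]
  rw [intervalIntegral.integral_of_le (zero_le_one (α := ℝ))]
  linarith

/-- (Herman's bound for the doubling map.) For the potential
`v(x) = 2cos(2πx)`, every `λ > 0` and every `E`, the Lyapunov exponent of the
Schrödinger cocycle over the doubling map satisfies `L(E;λ) ≥ log λ`. -/
theorem herman_lower_bound :
    ∀ lam > (0:ℝ), ∀ E : ℝ,
      lyap (fun x => !![E - lam * (2 * Real.cos (2 * Real.pi * x)), -1; 1, 0])
        ≥ Real.log lam := by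
  intro lam hlam E
  have hA : (fun x => !![E - lam * (2 * Real.cos (2 * Real.pi * x)), -1; 1, 0]) = Aher E lam := rfl
  rw [hA, lyap, ge_iff_le]
  apply le_ciInf
  intro n
  have hmain := main_n E lam hlam n
  have hpos : (0:ℝ) < (n:ℝ) + 1 := by positivity
  calc Real.log lam = (1/((n:ℝ)+1)) * (((n:ℝ)+1) * Real.log lam) := by field_simp
    _ ≤ (1/((n:ℝ)+1)) * ∫ x in (0:ℝ)..1,
          Real.log (matNorm (cocycle (Aher E lam) (n+1) x)) := by
        apply mul_le_mul_of_nonneg_left hmain (by positivity)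
    _ = (1/((n:ℕ)+1 : ℝ)) * ∫ x in (0:ℝ)..1,
          Real.log (matNorm (cocycle (Aher E lam) (n+1) x)) := by norm_num
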